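/- Flow decomposition theorem: every flow f on a network with m edges can be written as a sum of at most m flows, each of which is either an s–t path-flow or a cycle-flow. -/

import Mathlib

open Finset

/-- A network: a finite simple directed graph with capacities, a source `s`
(no incoming edges) and a sink `t` (no outgoing edges). -/
structure Network (V : Type) [Fintype V] [DecidableEq V] where
  E : Finset (V × V)
  c : V × V → ℝ
  s : V
  t : V
  hst : s ≠ t
  c_nonneg : ∀ e, 0 ≤ c e
  no_loops : ∀ v, (v, v) ∉ E
  no_into_s : ∀ v, (v, s) ∉ E
  no_out_t : ∀ v, (t, v) ∉ E

variable {V : Type} [Fintype V] [DecidableEq V]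

/-- A flow: nonnegative, supported on the edges, respecting capacities, and
conserving flow at every vertex other than the source and the sink. -/
def IsFlow (N : Network V) (f : V × V → ℝ) : Prop :=
  (∀ e, 0 ≤ f e) ∧ (∀ e, f e ≤ N.c e) ∧ (∀ e, e ∉ N.E → f e = 0) ∧
  ∀ v, v ≠ N.s → v ≠ N.t → ∑ w, f (v, w) = ∑ w, f (w, v)

/-- An `s`–`t` path-flow: a flow whose support (the set of edges carrying a
strictly positive amount of flow) is the edge set of a directed path from the
source to the sink. -/
def IsPathFlow (N : Network V) (g : V × V → ℝ) : Prop :=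
  IsFlow N g ∧ ∃ p : List V, p.Nodup ∧ p.head? = some N.s ∧ p.getLast? = some N.t ∧
    {e : V × V | 0 < g e} = {e : V × V | e ∈ p.zip p.tail}

/-- A cycle-flow: a flow whose support is the edge set of a directed cycle. -/
def IsCycleFlow (N : Network V) (g : V × V → ℝ) : Prop :=
  IsFlow N g ∧ ∃ p : List V, p.Nodup ∧ p ≠ [] ∧
    {e : V × V | 0 < g e} = {e : V × V | e ∈ p.zip (p.rotate 1)}

set_option linter.unusedSectionVars false

section Helpers
lemma card_filter_eq_countP_fst (L : List (V × V)) (hnd : L.Nodup) (v : V) :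
    (Finset.univ.filter (fun w => (v, w) ∈ L)).card = L.countP (fun e => e.1 = v) := by
  rw [List.countP_eq_length_filter,
    ← List.toFinset_card_of_nodup (hnd.filter _)]
  apply Finset.card_bij (fun w _ => (v, w))
  · intro w hw
    simp only [Finset.mem_filter, Finset.mem_univ, true_and] at hw
    simp [List.mem_filter, hw]
  · intro w1 _ w2 _ h
    simpa using congrArg Prod.snd h
  · intro e he
    simp only [List.mem_toFinset, List.mem_filter, decide_eq_true_eq] at he
    refine ⟨e.2, by simp [← he.2, he.1], by simp [← he.2]⟩

lemma card_filter_eq_countP_snd (L : List (V × V)) (hnd : L.Nodup) (v : V) :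
    (Finset.univ.filter (fun w => (w, v) ∈ L)).card = L.countP (fun e => e.2 = v) := by
  rw [List.countP_eq_length_filter,
    ← List.toFinset_card_of_nodup (hnd.filter _)]
  apply Finset.card_bij (fun w _ => (w, v))
  · intro w hw
    simp only [Finset.mem_filter, Finset.mem_univ, true_and] at hw
    simp [List.mem_filter, hw]
  · intro w1 _ w2 _ h
    simpa using congrArg Prod.fst h
  · intro e he
    simp only [List.mem_toFinset, List.mem_filter, decide_eq_true_eq] at he
    refine ⟨e.1, by simp [← he.2, he.1], by simp [← he.2]⟩

lemma build {N : Network V} {f : V × V → ℝ} (hf : IsFlow N f) (L : List (V × V))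
    (hLne : L ≠ []) (hnd : L.Nodup) (hpos : ∀ e ∈ L, 0 < f e)
    (hbal : ∀ v, v ≠ N.s → v ≠ N.t →
      L.countP (fun e => e.1 = v) = L.countP (fun e => e.2 = v)) :
    ∃ g : V × V → ℝ, IsFlow N g ∧ {e | 0 < g e} = {e | e ∈ L} ∧ (∀ e, g e ≤ f e) ∧
      ∃ e0 ∈ L, g e0 = f e0 := by
  have hS : L.toFinset.Nonempty := by
    obtain ⟨a, L', rfl⟩ := List.exists_cons_of_ne_nil hLne
    exact ⟨a, by simp⟩
  set ε := L.toFinset.inf' hS f with hε_def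
  have hε : 0 < ε :=
    (Finset.lt_inf'_iff hS).2 fun e he => hpos e (List.mem_toFinset.1 he)
  have hεle : ∀ e ∈ L, ε ≤ f e := fun e he => Finset.inf'_le f (List.mem_toFinset.2 he)
  refine ⟨fun e => if e ∈ L then ε else 0, ?_, ?_, ?_, ?_⟩
  · refine ⟨?_, ?_, ?_, ?_⟩
    · intro e; dsimp only; split
      · exact le_of_lt hε
      · exact le_refl 0
    · intro e; dsimp only; split
      · exact le_trans (hεle e (by assumption)) ((hf.2.1) e)
      · exact N.c_nonneg e
    · intro e he; dsimp only; split
      · exact absurd (hf.2.2.1 e he) (ne_of_gt (hpos e (by assumption)))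
      · rfl
    · intro v hvs hvt
      have e1 : (∑ w : V, if (v, w) ∈ L then ε else 0) =
          ((Finset.univ.filter (fun w => (v, w) ∈ L)).card : ℝ) * ε := by
        rw [Finset.sum_ite, Finset.sum_const, Finset.sum_const_zero, add_zero,
          nsmul_eq_mul]
      have e2 : (∑ w : V, if (w, v) ∈ L then ε else 0) =
          ((Finset.univ.filter (fun w => (w, v) ∈ L)).card : ℝ) * ε := by
        rw [Finset.sum_ite, Finset.sum_const, Finset.sum_const_zero, add_zero,
          nsmul_eq_mul]
      dsimp only
      rw [e1, e2, card_filter_eq_countP_fst L hnd v,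
        card_filter_eq_countP_snd L hnd v, hbal v hvs hvt]
  · ext e
    simp only [Set.mem_setOf_eq]
    constructor
    · intro h; by_contra hm; simp [hm] at h
    · intro h; simp [h, hε]
  · intro e; dsimp only; split
    · exact hεle e (by assumption)
    · exact hf.1 e
  · obtain ⟨e0, he0, heq⟩ := Finset.exists_mem_eq_inf' hS f
    exact ⟨e0, List.mem_toFinset.1 he0, by simp [List.mem_toFinset.1 he0, ← heq, hε_def]⟩

lemma zip_tail_app_single : ∀ (p : List V) (h : p ≠ []) (w : V),
    p.zip (p.tail ++ [w]) = p.zip p.tail ++ [(p.getLast h, w)]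
  | [a], _, w => by simp
  | a :: b :: q, _, w => by
    have ih := zip_tail_app_single (b :: q) (by simp) w
    have hg : (a :: b :: q).getLast (by simp) = (b :: q).getLast (by simp) :=
      List.getLast_cons _
    simp only [List.tail_cons, List.cons_append, List.zip_cons_cons] at *
    rw [ih, hg]

lemma zip_rotate_eq (p : List V) (h : p ≠ []) :
    p.zip (p.rotate 1) = p.zip p.tail ++ [(p.getLast h, p.head h)] := by
  have : p.rotate 1 = p.tail ++ [p.head h] := by
    obtain ⟨a, q, rfl⟩ := List.exists_cons_of_ne_nil h
    simp [List.rotate_cons_succ]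
  rw [this, zip_tail_app_single p h]

lemma zip_tail_snoc : ∀ (p : List V) (h : p ≠ []) (w : V),
    (p ++ [w]).zip ((p ++ [w]).tail) = p.zip p.tail ++ [(p.getLast h, w)]
  | [a], _, w => by simp
  | a :: b :: q, _, w => by
    have ih := zip_tail_snoc (b :: q) (by simp) w
    have hg : (a :: b :: q).getLast (by simp) = (b :: q).getLast (by simp) :=
      List.getLast_cons _
    simp only [List.cons_append, List.tail_cons, List.zip_cons_cons] at *
    rw [ih, hg]

lemma edges_append_right : ∀ (q l2 : List V) (e : V × V),
    e ∈ q.zip q.tail → e ∈ (q ++ l2).zip ((q ++ l2).tail)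
  | [], _, _, h => by simp at h
  | [a], _, _, h => by simp at h
  | a :: b :: q, l2, e, h => by
    simp only [List.tail_cons, List.zip_cons_cons, List.mem_cons, List.cons_append] at *
    rcases h with h | h
    · exact Or.inl h
    · exact Or.inr (edges_append_right (b :: q) l2 e h)

lemma edges_append_left : ∀ (l1 q : List V) (e : V × V),
    e ∈ q.zip q.tail → e ∈ (l1 ++ q).zip ((l1 ++ q).tail)
  | [], _, _, h => h
  | a :: l1, q, e, h => by
    have ih := edges_append_left l1 q e h
    rcases hlq : l1 ++ q with _ | ⟨b, m⟩
    · rw [hlq] at ih; simp at ih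
    · rw [hlq] at ih
      simp only [List.cons_append, hlq, List.zip_cons_cons, List.tail_cons, List.mem_cons]
      right
      exact ih

lemma map_fst_zip_tail : ∀ (q : List V), (q.zip q.tail).map Prod.fst = q.dropLast
  | [] => by simp
  | [a] => by simp
  | a :: b :: q => by
    have ih := map_fst_zip_tail (b :: q)
    simp only [List.tail_cons, List.zip_cons_cons, List.map_cons] at *
    rw [ih]
    simp

lemma map_snd_zip_tail : ∀ (q : List V), (q.zip q.tail).map Prod.snd = q.tail
  | [] => by simp
  | [a] => by simp
  | a :: b :: q => by
    have ih := map_snd_zip_tail (b :: q)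
    simp only [List.tail_cons, List.zip_cons_cons, List.map_cons] at *
    rw [ih]

def GoodCycle (f : V × V → ℝ) : Prop :=
  ∃ q : List V, q.Nodup ∧ q ≠ [] ∧ ∀ e ∈ q.zip (q.rotate 1), 0 < f e

def GoodPath (N : Network V) (f : V × V → ℝ) : Prop :=
  ∃ q : List V, q.Nodup ∧ q.head? = some N.s ∧ q.getLast? = some N.t ∧
    ∀ e ∈ q.zip q.tail, 0 < f e

lemma sum_pos_of_mem {h : V → ℝ} (hnn : ∀ w, 0 ≤ h w) (w0 : V) (hw0 : 0 < h w0) :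
    0 < ∑ w, h w :=
  lt_of_lt_of_le hw0 (Finset.single_le_sum (fun w _ => hnn w) (Finset.mem_univ w0))

lemma exists_pos_of_sum_pos {h : V → ℝ} (hs : 0 < ∑ w, h w) : ∃ w, 0 < h w := by
  by_contra hc
  push_neg at hc
  exact absurd (Finset.sum_nonpos fun w _ => hc w) (not_le.2 hs)

lemma mem_E_of_pos {N : Network V} {f : V × V → ℝ} (hf : IsFlow N f) {e : V × V}
    (he : 0 < f e) : e ∈ N.E := by
  by_contra hc
  exact absurd (hf.2.2.1 e hc) (ne_of_gt he)

lemma forward_walk {N : Network V} {f : V × V → ℝ} (hf : IsFlow N f) :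
    ∀ (n : ℕ) (p : List V) (hp : p ≠ []), p.Nodup →
      (∀ e ∈ p.zip p.tail, 0 < f e) → (∃ u, 0 < f (u, p.getLast hp)) →
      Fintype.card V + 1 ≤ p.length + n →
      GoodCycle f ∨ (∃ q : List V, q ≠ [] ∧ q.Nodup ∧ q.head? = p.head? ∧
        q.getLast? = some N.t ∧ (∀ e ∈ q.zip q.tail, 0 < f e)) := by
  intro n
  induction n with
  | zero =>
    intro p hp hnd _ _ hlen
    exact absurd (hnd.length_le_card) (by omega)
  | succ n ih =>
    intro p hp hnd hedges hlast hlen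
    by_cases hu : p.getLast hp = N.t
    · exact Or.inr ⟨p, hp, hnd, rfl, by rw [List.getLast?_eq_getLast hp, hu], hedges⟩
    · obtain ⟨u', hu'⟩ := hlast
      have hus : p.getLast hp ≠ N.s := fun h =>
        N.no_into_s u' (h ▸ mem_E_of_pos hf hu')
      have hin : 0 < ∑ w, f (w, p.getLast hp) :=
        sum_pos_of_mem (fun w => hf.1 _) u' hu'
      have hout : 0 < ∑ w, f (p.getLast hp, w) := by
        rw [hf.2.2.2 _ hus hu]; exact hin
      obtain ⟨w, hw⟩ := exists_pos_of_sum_pos hout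
      by_cases hwp : w ∈ p
      · left
        obtain ⟨l1, l2, rfl⟩ := List.append_of_mem hwp
        refine ⟨w :: l2, ?_, by simp, ?_⟩
        · exact ((List.nodup_append.1 hnd).2.1)
        · intro e he
          rw [zip_rotate_eq (w :: l2) (by simp)] at he
          rcases List.mem_append.1 he with he | he
          · exact hedges e (edges_append_left l1 (w :: l2) e he)
          · have hlast_eq : (l1 ++ w :: l2).getLast hp = (w :: l2).getLast (by simp) := by
              rw [List.getLast_append]
              simp
            simp only [List.mem_singleton] at he
            subst he
            rw [List.head_cons, ← hlast_eq]
            exact hw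
      · have hnd' : (p ++ [w]).Nodup := by
          rw [List.nodup_append]
          exact ⟨hnd, List.nodup_singleton w, by intro a ha b hb hab; rw [List.mem_singleton] at hb; subst hb; subst hab; exact hwp ha⟩
        have hedges' : ∀ e ∈ (p ++ [w]).zip (p ++ [w]).tail, 0 < f e := by
          intro e he
          rw [zip_tail_snoc p hp w] at he
          rcases List.mem_append.1 he with he | he
          · exact hedges e he
          · simp only [List.mem_singleton] at he; subst he; exact hw
        have hlast' : ∃ u, 0 < f (u, (p ++ [w]).getLast (by simp)) := by
          refine ⟨p.getLast hp, ?_⟩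
          rw [List.getLast_append]
          simpa using hw
        have := ih (p ++ [w]) (by simp) hnd' hedges' hlast'
          (by simp only [List.length_append, List.length_singleton]; omega)
        rcases this with h | ⟨q, hq1, hq2, hq3, hq4, hq5⟩
        · exact Or.inl h
        · refine Or.inr ⟨q, hq1, hq2, ?_, hq4, hq5⟩
          rw [hq3]
          obtain ⟨a, p', rfl⟩ := List.exists_cons_of_ne_nil hp
          simp

lemma zip_cons_head (p : List V) (hp : p ≠ []) (w : V) :
    (w :: p).zip p = (w, p.head hp) :: p.zip p.tail := by
  obtain ⟨a, p', rfl⟩ := List.exists_cons_of_ne_nil hp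
  rfl

lemma backward_walk {N : Network V} {f : V × V → ℝ} (hf : IsFlow N f) :
    ∀ (n : ℕ) (p : List V) (hp : p ≠ []), p.Nodup →
      (∀ e ∈ p.zip p.tail, 0 < f e) → (∃ u, 0 < f (p.head hp, u)) →
      p.getLast? = some N.t →
      Fintype.card V + 1 ≤ p.length + n →
      GoodCycle f ∨ GoodPath N f := by
  intro n
  induction n with
  | zero =>
    intro p hp hnd _ _ _ hlen
    exact absurd (hnd.length_le_card) (by omega)
  | succ n ih =>
    intro p hp hnd hedges hhead hlastt hlen
    by_cases hu : p.head hp = N.s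
    · exact Or.inr ⟨p, hnd, by rw [List.head?_eq_head hp, hu], hlastt, hedges⟩
    · obtain ⟨u', hu'⟩ := hhead
      have hut : p.head hp ≠ N.t := fun h =>
        N.no_out_t u' (h ▸ mem_E_of_pos hf hu')
      have hout : 0 < ∑ w, f (p.head hp, w) :=
        sum_pos_of_mem (fun w => hf.1 _) u' hu'
      have hin : 0 < ∑ w, f (w, p.head hp) := by
        rw [← hf.2.2.2 _ hu hut]; exact hout
      obtain ⟨w, hw⟩ := exists_pos_of_sum_pos hin
      by_cases hwp : w ∈ p
      · left
        obtain ⟨l1, l2, hpe⟩ := List.append_of_mem hwp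
        have hpe' : p = (l1 ++ [w]) ++ l2 := by rw [hpe]; simp
        refine ⟨l1 ++ [w], ?_, by simp, ?_⟩
        · rw [hpe'] at hnd
          exact (List.nodup_append.1 hnd).1
        · intro e he
          rw [zip_rotate_eq (l1 ++ [w]) (by simp)] at he
          rcases List.mem_append.1 he with he | he
          · refine hedges e ?_
            rw [hpe']
            exact edges_append_right (l1 ++ [w]) l2 e he
          · simp only [List.mem_singleton] at he
            subst he
            have h1 : (l1 ++ [w]).getLast (by simp) = w := by
              rw [List.getLast_append]; simp
            have h2 : (l1 ++ [w]).head (by simp) = p.head hp := by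
              have h3 : (l1 ++ [w] : List V).head? = p.head? := by
                rw [hpe']
                rcases l1 with _ | ⟨x, l1'⟩ <;> simp
              rw [List.head?_eq_head (l := l1 ++ [w]) (by simp),
                List.head?_eq_head hp] at h3
              exact Option.some.inj h3
            rw [h1, h2]
            exact hw
      · have hnd' : (w :: p).Nodup := List.nodup_cons.2 ⟨hwp, hnd⟩
        have hedges' : ∀ e ∈ (w :: p).zip (w :: p).tail, 0 < f e := by
          intro e he
          rw [List.tail_cons, zip_cons_head p hp w] at he
          rcases List.mem_cons.1 he with he | he
          · subst he; exact hw
          · exact hedges e he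
        have hlastt' : (w :: p).getLast? = some N.t := by
          obtain ⟨a, p', rfl⟩ := List.exists_cons_of_ne_nil hp
          rw [List.getLast?_cons_cons]
          exact hlastt
        exact ih (w :: p) (by simp) hnd' hedges'
          ⟨p.head hp, by simpa using hw⟩ hlastt'
          (by simp only [List.length_cons]; omega)

lemma exists_good {N : Network V} {f : V × V → ℝ} (hf : IsFlow N f)
    (hne : ∃ e, 0 < f e) : GoodCycle f ∨ GoodPath N f := by
  obtain ⟨⟨a, b⟩, hab⟩ := hne
  have habE : (a, b) ∈ N.E := mem_E_of_pos hf hab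
  have hne' : a ≠ b := fun h => N.no_loops a (h ▸ habE)
  have h0 := forward_walk hf (Fintype.card V) [a, b] (by simp)
    (by simp [hne']) (by intro e he; simp at he; subst he; exact hab)
    ⟨a, by simpa using hab⟩ (by simp)
  rcases h0 with h | ⟨q, hq1, hq2, hq3, hq4, hq5⟩
  · exact Or.inl h
  · have hqa : q.head hq1 = a := by
      rw [List.head?_eq_head hq1] at hq3
      simpa using hq3
    exact backward_walk hf (Fintype.card V) q hq1 hq2 hq5
      ⟨b, by rw [hqa]; exact hab⟩ hq4
      (by have := List.length_pos_iff.2 hq1; omega)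

lemma countP_eq_ite (l : List V) (hl : l.Nodup) (v : V) :
    l.countP (fun x => x = v) = if v ∈ l then 1 else 0 := by
  induction l with
  | nil => simp
  | cons a l ih =>
    obtain ⟨ha, hl'⟩ := List.nodup_cons.1 hl
    rw [List.countP_cons]
    by_cases hv : v = a
    · subst hv
      simp [ih hl', ha]
    · simp [ih hl', hv, Ne.symm hv]

lemma peel {N : Network V} {f : V × V → ℝ} (hf : IsFlow N f) (hne : ∃ e, 0 < f e) :
    ∃ g : V × V → ℝ, (IsPathFlow N g ∨ IsCycleFlow N g) ∧ (∀ e, g e ≤ f e) ∧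
      (∀ e, 0 ≤ g e) ∧ ∃ e0, 0 < f e0 ∧ g e0 = f e0 := by
  rcases exists_good hf hne with ⟨q, hnd, hqne, hpos⟩ | ⟨q, hnd, hh, hl, hpos⟩
  · -- cycle
    set L := q.zip (q.rotate 1) with hL
    have hmapfst : L.map Prod.fst = q :=
      List.map_fst_zip (by simp)
    have hmapsnd : L.map Prod.snd = q.rotate 1 :=
      List.map_snd_zip (by simp)
    have hLnd : L.Nodup := (hmapfst ▸ hnd : (L.map Prod.fst).Nodup).of_map _
    have hLne : L ≠ [] := by
      intro h
      have := congrArg List.length hmapfst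
      rw [h] at this
      simp at this
      exact hqne (List.length_eq_zero_iff.1 this.symm)
    have hbal : ∀ v, v ≠ N.s → v ≠ N.t →
        L.countP (fun e => e.1 = v) = L.countP (fun e => e.2 = v) := by
      intro v _ _
      have h1 : L.countP (fun e => e.1 = v) = (L.map Prod.fst).countP (fun x => x = v) := by
        rw [List.countP_map]; rfl
      have h2 : L.countP (fun e => e.2 = v) = (L.map Prod.snd).countP (fun x => x = v) := by
        rw [List.countP_map]; rfl
      rw [h1, h2, hmapfst, hmapsnd, (List.rotate_perm q 1).countP_eq]
    obtain ⟨g, hgf, hgsupp, hgle, e0, he0, he0'⟩ := build hf L hLne hLnd hpos hbal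
    exact ⟨g, Or.inr ⟨hgf, q, hnd, hqne, hgsupp⟩, hgle, hgf.1,
      e0, hpos e0 he0, he0'⟩
  · -- path
    have hqne : q ≠ [] := by rintro rfl; simp at hh
    have hlast : q.getLast hqne = N.t := by
      rw [List.getLast?_eq_getLast hqne] at hl
      exact Option.some.inj hl
    have hhead : q.head hqne = N.s := by
      rw [List.head?_eq_head hqne] at hh
      exact Option.some.inj hh
    have hq2 : 2 ≤ q.length := by
      rcases q with _ | ⟨a, _ | ⟨b, q'⟩⟩
      · simp at hh
      · exact absurd (hhead.symm.trans hlast) N.hst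
      · simp
    set L := q.zip q.tail with hL
    have hmapfst : L.map Prod.fst = q.dropLast := map_fst_zip_tail q
    have hmapsnd : L.map Prod.snd = q.tail := map_snd_zip_tail q
    have hdlnd : q.dropLast.Nodup := hnd.sublist (List.dropLast_sublist q)
    have htlnd : q.tail.Nodup := hnd.sublist (List.tail_sublist q)
    have hLnd : L.Nodup := (hmapfst ▸ hdlnd : (L.map Prod.fst).Nodup).of_map _
    have hLne : L ≠ [] := by
      intro h
      have := congrArg List.length h
      rw [hL, List.length_zip, List.length_tail] at this
      simp at this
      omega
    have hbal : ∀ v, v ≠ N.s → v ≠ N.t →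
        L.countP (fun e => e.1 = v) = L.countP (fun e => e.2 = v) := by
      intro v hvs hvt
      have h1 : L.countP (fun e => e.1 = v) = (L.map Prod.fst).countP (fun x => x = v) := by
        rw [List.countP_map]; rfl
      have h2 : L.countP (fun e => e.2 = v) = (L.map Prod.snd).countP (fun x => x = v) := by
        rw [List.countP_map]; rfl
      have hmem : v ∈ q.dropLast ↔ v ∈ q.tail := by
        have hqd : q.dropLast ++ [q.getLast hqne] = q := List.dropLast_append_getLast hqne
        have hqc : q.head hqne :: q.tail = q := List.cons_head_tail hqne
        constructor
        · intro hv
          have : v ∈ q := by rw [← hqd]; exact List.mem_append_left _ hv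
          rw [← hqc] at this
          rcases List.mem_cons.1 this with h | h
          · exact absurd (h.trans hhead) hvs
          · exact h
        · intro hv
          have : v ∈ q := by rw [← hqc]; exact List.mem_cons_of_mem _ hv
          rw [← hqd] at this
          rcases List.mem_append.1 this with h | h
          · exact h
          · simp only [List.mem_singleton] at h
            exact absurd (h.trans hlast) hvt
      rw [h1, h2, hmapfst, hmapsnd, countP_eq_ite _ hdlnd, countP_eq_ite _ htlnd]
      simp [hmem]
    obtain ⟨g, hgf, hgsupp, hgle, e0, he0, he0'⟩ := build hf L hLne hLnd hpos hbal
    exact ⟨g, Or.inl ⟨hgf, q, hnd, hh, hl, hgsupp⟩, hgle, hgf.1,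
      e0, hpos e0 he0, he0'⟩

open Classical in
noncomputable def suppF (f : V × V → ℝ) : Finset (V × V) :=
  Finset.univ.filter fun e => 0 < f e

open Classical in
lemma mem_suppF {f : V × V → ℝ} {e : V × V} : e ∈ suppF f ↔ 0 < f e := by
  simp [suppF]

lemma main_aux {N : Network V} : ∀ (n : ℕ) (f : V × V → ℝ), IsFlow N f →
    (suppF f).card ≤ n →
    ∃ (k : ℕ) (g : Fin k → V × V → ℝ), k ≤ (suppF f).card ∧
      (∀ i, IsPathFlow N (g i) ∨ IsCycleFlow N (g i)) ∧ ∀ e, f e = ∑ i, g i e := by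
  intro n
  induction n with
  | zero =>
    intro f hf hcard
    have hz : ∀ e, f e = 0 := by
      intro e
      by_contra h
      have : e ∈ suppF f := mem_suppF.2 (lt_of_le_of_ne (hf.1 e) (Ne.symm h))
      have := Finset.card_pos.2 ⟨e, this⟩
      omega
    exact ⟨0, fun i => i.elim0, Nat.zero_le _, fun i => i.elim0, fun e => by simp [hz e]⟩
  | succ n ih =>
    intro f hf hcard
    by_cases h0 : suppF f = ∅
    · have hz : ∀ e, f e = 0 := by
        intro e
        by_contra h
        have : e ∈ suppF f := mem_suppF.2 (lt_of_le_of_ne (hf.1 e) (Ne.symm h))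
        simp [h0] at this
      exact ⟨0, fun i => i.elim0, Nat.zero_le _, fun i => i.elim0, fun e => by simp [hz e]⟩
    · obtain ⟨e1, he1⟩ := Finset.nonempty_iff_ne_empty.2 h0
      obtain ⟨g1, hg1or, hg1le, hg1nn, e0, he0f, he0⟩ := peel hf ⟨e1, mem_suppF.1 he1⟩
      have hg1flow : IsFlow N g1 := by
        rcases hg1or with h | h
        · exact h.1
        · exact h.1
      set f' : V × V → ℝ := fun e => f e - g1 e with hf'def
      have hf' : IsFlow N f' := by
        refine ⟨fun e => by simp [hf'def, hg1le e], fun e => ?_, fun e he => ?_, ?_⟩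
        · calc f e - g1 e ≤ f e := by linarith [hg1nn e]
          _ ≤ N.c e := hf.2.1 e
        · simp [hf'def, hf.2.2.1 e he, hg1flow.2.2.1 e he]
        · intro v hvs hvt
          simp only [hf'def]
          rw [Finset.sum_sub_distrib, Finset.sum_sub_distrib,
            hf.2.2.2 v hvs hvt, hg1flow.2.2.2 v hvs hvt]
      have hsub : suppF f' ⊆ suppF f := by
        intro e he
        rw [mem_suppF] at he ⊢
        have := hg1nn e
        simp only [hf'def] at he
        linarith
      have hssub : suppF f' ⊂ suppF f := by
        refine ⟨hsub, fun hcontra => ?_⟩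
        have h1 : e0 ∈ suppF f := mem_suppF.2 he0f
        have h2 : e0 ∈ suppF f' := hcontra h1
        rw [mem_suppF] at h2
        simp only [hf'def] at h2
        linarith
      have hlt : (suppF f').card < (suppF f).card := Finset.card_lt_card hssub
      obtain ⟨k', g', hk', hgor', hsum'⟩ := ih f' hf' (by omega)
      refine ⟨k' + 1, Fin.cons g1 g', by omega, ?_, ?_⟩
      · intro i
        refine Fin.cases ?_ ?_ i
        · simpa using hg1or
        · intro j
          simpa using hgor' j
      · intro e
        rw [Fin.sum_univ_succ]
        simp only [Fin.cons_zero, Fin.cons_succ]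
        have := hsum' e
        simp only [hf'def] at this
        linarith


end Helpers

/-- flow decomposition: every flow on a network with `m` edges
is the sum of at most `m` flows, each of which is an `s`–`t` path-flow or a
cycle-flow. -/
theorem flow_decomposition (N : Network V) (f : V × V → ℝ) (hf : IsFlow N f) :
    ∃ (k : ℕ) (g : Fin k → V × V → ℝ),
      k ≤ N.E.card ∧
      (∀ i, IsPathFlow N (g i) ∨ IsCycleFlow N (g i)) ∧
      ∀ e, f e = ∑ i, g i e := by

  obtain ⟨k, g, hk, hor, hsum⟩ := main_aux (suppF f).card f hf le_rfl
  refine ⟨k, g, le_trans hk (Finset.card_le_card fun e he => ?_), hor, hsum⟩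
  exact mem_E_of_pos hf (mem_suppF.1 he)
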